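/- Let τ be a real number and let g : ℝ → ℝ be differentiable at every point of [τ, ∞) with g(t) > 0 and g'(t) > 0 for every t ≥ τ. Let f : ℝ → ℝ be a continuous, nonnegative, nondecreasing function such that (i) there exists T ∈ ℝ with f(t) = g(t) for all t ≥ T, and (ii) at every point t where f(t) > 0, the function f is differentiable at t and f'(t) ≤ g'(t). Then f(t) > 0 for all t > τ. -/

import Mathlib

/-- Analytic core of the proof of boundedness of the pseudo-effective threshold:
if `g` is positive and strictly increasing (via positive derivative) on `[τ, ∞)`,
`f` is continuous, nonnegative, nondecreasing, eventually agrees with `g`, and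
wherever `f > 0` it is differentiable with `f' ≤ g'`, then `f > 0` on `(τ, ∞)`. -/
theorem stmt_0 (τ : ℝ) (f g : ℝ → ℝ)
    (hg_diff : ∀ t ∈ Set.Ici τ, DifferentiableAt ℝ g t)
    (hg_pos : ∀ t, τ ≤ t → 0 < g t)
    (hg'_pos : ∀ t, τ ≤ t → 0 < deriv g t)
    (hf_cont : Continuous f)
    (hf_nonneg : ∀ t, 0 ≤ f t)
    (hf_mono : Monotone f)
    (hfg : ∃ T : ℝ, ∀ t, T ≤ t → f t = g t)
    (hf_diff : ∀ t, 0 < f t → DifferentiableAt ℝ f t ∧ deriv f t ≤ deriv g t) :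
    ∀ t, τ < t → 0 < f t := by
  obtain ⟨T, hT⟩ := hfg
  by_contra h
  push_neg at h
  obtain ⟨t₀, ht₀, ht₀0⟩ := h
  have hft₀ : f t₀ = 0 := le_antisymm ht₀0 (hf_nonneg t₀)
  set Z : Set ℝ := {t | f t = 0} with hZ
  have hZne : Z.Nonempty := ⟨t₀, hft₀⟩
  have hZbdd : BddAbove Z := by
    refine ⟨max T τ, fun t ht => ?_⟩
    by_contra hlt
    push_neg at hlt
    have h1 : f t = g t := hT t (le_of_lt (lt_of_le_of_lt (le_max_left T τ) hlt))
    have h2 : 0 < g t := hg_pos t (le_of_lt (lt_of_le_of_lt (le_max_right T τ) hlt))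
    rw [ht] at h1
    linarith
  have hZclosed : IsClosed Z := isClosed_eq hf_cont continuous_const
  set s := sSup Z with hs
  have hsZ : s ∈ Z := hZclosed.csSup_mem hZne hZbdd
  have hfs : f s = 0 := hsZ
  have hts : t₀ ≤ s := le_csSup hZbdd hft₀
  have hτs : τ < s := lt_of_lt_of_le ht₀ hts
  have hpos : ∀ u, s < u → 0 < f u := fun u hu => by
    rcases lt_or_eq_of_le (hf_nonneg u) with h' | h'
    · exact h'
    · exact absurd (le_csSup hZbdd h'.symm) (not_le.mpr hu)
  have hmono : MonotoneOn (fun t => g t - f t) (Set.Ici s) := by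
    apply monotoneOn_of_deriv_nonneg (convex_Ici s)
    · intro t ht
      exact ((hg_diff t (le_trans hτs.le ht)).continuousAt.continuousWithinAt).sub
        hf_cont.continuousWithinAt
    · intro t ht
      rw [interior_Ici] at ht
      exact ((hg_diff t (le_trans hτs.le ht.le)).sub (hf_diff t (hpos t ht)).1).differentiableWithinAt
    · intro t ht
      rw [interior_Ici] at ht
      have hgd := hg_diff t (le_trans hτs.le ht.le)
      have hfd := hf_diff t (hpos t ht)
      rw [deriv_fun_sub hgd hfd.1]
      linarith [hfd.2]
  set u := max s T with hu
  have h1 : (fun t => g t - f t) s ≤ (fun t => g t - f t) u :=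
    hmono (Set.self_mem_Ici) (le_max_left s T) (le_max_left s T)
  have h2 : f u = g u := hT u (le_max_right s T)
  have h3 : 0 < g s := hg_pos s hτs.le
  simp only [hfs, h2] at h1
  linarith
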